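/- Let 0 < ρ ≤ 1, λ > 0, μ > 0, M > 0 and n₀ ≥ 0. Then for every t > 0, (1/t) ∫_0^t [ n₀ E_{ρ,1}(-(λ+μ) s^ρ) + (Mλ/(λ+μ)) (1 − E_{ρ,1}(-(λ+μ) s^ρ)) ] ds = ( n₀ − Mλ/(λ+μ) ) E_{ρ,2}(-(λ+μ) t^ρ) + Mλ/(λ+μ). -/

import Mathlib

open MeasureTheory Real

/-- Two-parameter Mittag-Leffler function. -/
noncomputable def ml2 (ρ δ x : ℝ) : ℝ := ∑' k : ℕ, x ^ k / Real.Gamma ((k : ℝ) * ρ + δ)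

/-- Auxiliary: summability of `x^k / (k/N)!`. -/
lemma aux_summable_pow_div_fact (x : ℝ) (hx : 0 ≤ x) (N : ℕ) (hN : 0 < N) :
    Summable (fun k : ℕ => x ^ k / (Nat.factorial (k / N) : ℝ)) := by
  haveI : NeZero N := ⟨hN.ne'⟩
  rw [← (Nat.divModEquiv N).symm.summable_iff]
  set M1 : ℝ := max 1 x with hM1
  have hM1x : x ≤ M1 := le_max_right _ _
  have hM11 : (1:ℝ) ≤ M1 := le_max_left _ _
  have hM10 : (0:ℝ) ≤ M1 := zero_le_one.trans hM11
  have hbig : Summable (fun p : ℕ × Fin N => M1 ^ N * ((M1 ^ N) ^ p.1 / (Nat.factorial p.1 : ℝ))) := by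
    rw [summable_prod_of_nonneg (by intro p; positivity)]
    refine ⟨fun q => Summable.of_finite, ?_⟩
    simp only [tsum_fintype, Finset.sum_const, Finset.card_univ, Fintype.card_fin, nsmul_eq_mul]
    exact ((Real.summable_pow_div_factorial (M1 ^ N)).mul_left _).mul_left _
  refine Summable.of_nonneg_of_le
    (fun p => div_nonneg (pow_nonneg hx _) (Nat.cast_nonneg _)) (fun p => ?_) hbig
  simp only [Function.comp_apply]
  have hdiv : ((Nat.divModEquiv N).symm p) / N = p.1 := by
    simp only [Nat.divModEquiv, Equiv.coe_fn_symm_mk]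
    rw [Nat.add_comm, Nat.add_mul_div_right _ _ hN, Nat.div_eq_of_lt p.2.is_lt, Nat.zero_add]
  have h1 : x ^ ((Nat.divModEquiv N).symm p : ℕ) ≤ M1 ^ N * (M1 ^ N) ^ p.1 := by
    have hle : ((Nat.divModEquiv N).symm p : ℕ) ≤ p.1 * N + N := by
      simpa [Nat.divModEquiv] using Nat.add_le_add_left (le_of_lt p.2.is_lt) (p.1 * N)
    calc x ^ ((Nat.divModEquiv N).symm p : ℕ) ≤ M1 ^ ((Nat.divModEquiv N).symm p : ℕ) :=
          pow_le_pow_left₀ hx hM1x _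
      _ ≤ M1 ^ (p.1 * N + N) := pow_le_pow_right₀ hM11 hle
      _ = M1 ^ N * (M1 ^ N) ^ p.1 := by rw [pow_add, ← pow_mul]; ring
  rw [hdiv, ← mul_div_assoc]
  gcongr

/-- Gamma lower bound by factorial. -/
lemma aux_fact_le_Gamma (m : ℕ) (hm : 1 ≤ m) (x : ℝ) (hx : (m : ℝ) + 1 ≤ x) :
    (Nat.factorial m : ℝ) ≤ Real.Gamma x := by
  have h2 : (2:ℝ) ≤ (m : ℝ) + 1 := by
    have : (1:ℝ) ≤ (m:ℝ) := by exact_mod_cast hm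
    linarith
  have hmem1 : ((m:ℝ) + 1) ∈ Set.Ici (2:ℝ) := h2
  have hmem2 : x ∈ Set.Ici (2:ℝ) := h2.trans hx
  calc (Nat.factorial m : ℝ) = Real.Gamma ((m:ℝ) + 1) := (Real.Gamma_nat_eq_factorial m).symm
    _ ≤ Real.Gamma x := Real.Gamma_strictMonoOn_Ici.monotoneOn hmem1 hmem2 hx

/-- Summability of the Mittag-Leffler series. -/
lemma ml2_summable (ρ δ : ℝ) (hρ : 0 < ρ) (hδ : 1 ≤ δ) (x : ℝ) :
    Summable (fun k : ℕ => x ^ k / Real.Gamma ((k : ℝ) * ρ + δ)) := by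
  have hΓpos : ∀ k : ℕ, 0 < Real.Gamma ((k : ℝ) * ρ + δ) := fun k =>
    Real.Gamma_pos_of_pos (by positivity)
  rw [← summable_abs_iff]
  have habs : ∀ k : ℕ, |x ^ k / Real.Gamma ((k : ℝ) * ρ + δ)|
      = |x| ^ k / Real.Gamma ((k : ℝ) * ρ + δ) := fun k => by
    rw [abs_div, abs_pow, abs_of_pos (hΓpos k)]
  simp only [habs]
  set y := |x| with hy
  have hy0 : 0 ≤ y := abs_nonneg x
  set N : ℕ := ⌈1/ρ⌉₊ with hNdef
  have hN : 0 < N := Nat.ceil_pos.mpr (by positivity)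
  have hNρ : 1 / ρ ≤ (N : ℝ) := Nat.le_ceil _
  rw [← summable_nat_add_iff N]
  have hsum := (summable_nat_add_iff N).mpr (aux_summable_pow_div_fact y hy0 N hN)
  refine Summable.of_nonneg_of_le
    (fun k => div_nonneg (pow_nonneg hy0 _) (hΓpos _).le) (fun k => ?_) hsum
  have hm1 : 1 ≤ (k + N) / N := Nat.one_le_div_iff hN |>.mpr (Nat.le_add_left N k)
  have hmle : ((((k + N) / N : ℕ)) : ℝ) + 1 ≤ ((k + N : ℕ) : ℝ) * ρ + δ := by
    have h1 : ((((k + N) / N : ℕ)) : ℝ) ≤ ((k + N : ℕ) : ℝ) / (N : ℝ) := Nat.cast_div_le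
    have h2 : ((k + N : ℕ) : ℝ) / (N : ℝ) ≤ ((k + N : ℕ) : ℝ) * ρ := by
      rw [div_le_iff₀ (by exact_mod_cast hN)]
      have : 1 ≤ ρ * (N:ℝ) := by
        rw [← div_le_iff₀' hρ]; exact hNρ
      calc ((k + N : ℕ) : ℝ) = ((k + N : ℕ) : ℝ) * 1 := (mul_one _).symm
        _ ≤ ((k + N : ℕ) : ℝ) * (ρ * (N:ℝ)) := by
            apply mul_le_mul_of_nonneg_left this (Nat.cast_nonneg _)
        _ = ((k + N : ℕ) : ℝ) * ρ * (N:ℝ) := by ring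
    nlinarith [h1.trans h2]
  have := aux_fact_le_Gamma ((k + N) / N) hm1 (((k + N : ℕ) : ℝ) * ρ + δ) hmle
  gcongr

lemma ml2_integral (ρ a t : ℝ) (hρ : 0 < ρ) (ha : 0 < a) (ht : 0 < t) :
    IntegrableOn (fun s => ml2 ρ 1 (-a * s ^ ρ)) (Set.Ioc 0 t) ∧
    ∫ s in Set.Ioc (0:ℝ) t, ml2 ρ 1 (-a * s ^ ρ) = t * ml2 ρ 2 (-a * t ^ ρ) := by
  have hΓpos : ∀ k : ℕ, 0 < Real.Gamma ((k:ℝ) * ρ + 1) :=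
    fun k => Real.Gamma_pos_of_pos (by positivity)
  set f : ℕ → ℝ → ℝ := fun k s => ((-a) ^ k / Real.Gamma ((k:ℝ) * ρ + 1)) * s ^ (ρ * (k:ℝ))
    with hf
  -- pointwise identification of the series
  have hsummand : ∀ s : ℝ, 0 ≤ s →
      (fun k : ℕ => (-a * s ^ ρ) ^ k / Real.Gamma ((k:ℝ) * ρ + 1)) = fun k => f k s := by
    intro s hs; funext k
    rw [hf]; dsimp only
    rw [mul_pow, ← Real.rpow_natCast (s ^ ρ) k, ← Real.rpow_mul hs]
    ring
  have hsum_eq : ∀ s : ℝ, 0 < s → HasSum (fun k => f k s) (ml2 ρ 1 (-a * s ^ ρ)) := by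
    intro s hs
    have hS : Summable (fun k : ℕ => (-a * s ^ ρ) ^ k / Real.Gamma ((k:ℝ) * ρ + 1)) :=
      ml2_summable ρ 1 hρ le_rfl _
    rw [← hsummand s hs.le]
    exact hS.hasSum
  -- integrability of each term
  have hintf : ∀ k : ℕ, IntegrableOn (f k) (Set.Ioc 0 t) := by
    intro k
    have h1 : (-1:ℝ) < ρ * (k:ℝ) := lt_of_lt_of_le neg_one_lt_zero (by positivity)
    exact ((intervalIntegral.intervalIntegrable_rpow' h1 (a := 0) (b := t)).const_mul _).1
  -- value of the basic rpow integral
  have hrpow_int : ∀ k : ℕ, ∫ s in Set.Ioc (0:ℝ) t, s ^ (ρ * (k:ℝ))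
      = t ^ (ρ * (k:ℝ) + 1) / (ρ * (k:ℝ) + 1) := by
    intro k
    have h1 : (-1:ℝ) < ρ * (k:ℝ) := lt_of_lt_of_le neg_one_lt_zero (by positivity)
    rw [← intervalIntegral.integral_of_le ht.le, integral_rpow (Or.inl h1),
      Real.zero_rpow (by positivity : ρ * (k:ℝ) + 1 ≠ 0)]
    ring
  -- generic algebraic identity for the summed integrals
  have hterm : ∀ (b : ℝ) (k : ℕ),
      (b ^ k / Real.Gamma ((k:ℝ) * ρ + 1)) * (t ^ (ρ * (k:ℝ) + 1) / (ρ * (k:ℝ) + 1))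
        = t * ((b * t ^ ρ) ^ k / Real.Gamma ((k:ℝ) * ρ + 2)) := by
    intro b k
    have hΓ2 : Real.Gamma ((k:ℝ) * ρ + 2) = (ρ * (k:ℝ) + 1) * Real.Gamma ((k:ℝ) * ρ + 1) := by
      have h := Real.Gamma_add_one (s := (k:ℝ) * ρ + 1) (by positivity)
      calc Real.Gamma ((k:ℝ) * ρ + 2) = Real.Gamma (((k:ℝ) * ρ + 1) + 1) := by ring_nf
        _ = ((k:ℝ) * ρ + 1) * Real.Gamma ((k:ℝ) * ρ + 1) := h
        _ = (ρ * (k:ℝ) + 1) * Real.Gamma ((k:ℝ) * ρ + 1) := by ring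
    have hpow : t ^ (ρ * (k:ℝ) + 1) = (t ^ ρ) ^ k * t := by
      rw [Real.rpow_add ht, Real.rpow_one, ← Real.rpow_natCast (t ^ ρ) k,
        ← Real.rpow_mul ht.le]
    have h1 : (ρ * (k:ℝ) + 1) ≠ 0 := by positivity
    have h2 : Real.Gamma ((k:ℝ) * ρ + 1) ≠ 0 := (hΓpos k).ne'
    rw [hΓ2, hpow, mul_pow]
    field_simp
  -- norm integrals and their summability
  have hnorm : ∀ k : ℕ, ∫ s in Set.Ioc (0:ℝ) t, ‖f k s‖
      = t * ((a * t ^ ρ) ^ k / Real.Gamma ((k:ℝ) * ρ + 2)) := by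
    intro k
    have heq : ∀ s ∈ Set.Ioc (0:ℝ) t,
        ‖f k s‖ = (a ^ k / Real.Gamma ((k:ℝ) * ρ + 1)) * s ^ (ρ * (k:ℝ)) := by
      intro s hs
      rw [hf]; dsimp only
      rw [Real.norm_eq_abs, abs_mul, abs_div, abs_pow, abs_neg, abs_of_pos ha,
        abs_of_pos (hΓpos k), abs_of_nonneg (Real.rpow_nonneg hs.1.le _)]
    rw [setIntegral_congr_fun measurableSet_Ioc heq, integral_const_mul, hrpow_int k,
      hterm a k]
  have hsummable_norm : Summable fun k : ℕ => ∫ s in Set.Ioc (0:ℝ) t, ‖f k s‖ := by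
    simp only [hnorm]
    exact (ml2_summable ρ 2 hρ one_le_two (a * t ^ ρ)).mul_left t
  -- interchange of sum and integral
  have hint := integral_tsum_of_summable_integral_norm
    (μ := volume.restrict (Set.Ioc (0:ℝ) t)) (F := f) hintf hsummable_norm
  -- measurability and integrability of the ml2 function
  have hASM : AEStronglyMeasurable (fun s => ml2 ρ 1 (-a * s ^ ρ))
      (volume.restrict (Set.Ioc (0:ℝ) t)) := by
    apply aestronglyMeasurable_of_tendsto_ae
      (f := fun n s => ∑ k ∈ Finset.range n, f k s) Filter.atTop
    · intro n
      apply Continuous.aestronglyMeasurable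
      apply continuous_finset_sum
      intro k _
      exact continuous_const.mul (Real.continuous_rpow_const (by positivity))
    · filter_upwards [ae_restrict_mem measurableSet_Ioc] with s hs
      exact (hsum_eq s hs.1).tendsto_sum_nat
  have hBsum : Summable (fun k : ℕ => (a * t ^ ρ) ^ k / Real.Gamma ((k:ℝ) * ρ + 1)) :=
    ml2_summable ρ 1 hρ le_rfl _
  set B : ℝ := ∑' k : ℕ, (a * t ^ ρ) ^ k / Real.Gamma ((k:ℝ) * ρ + 1) with hB
  have hbound : ∀ s ∈ Set.Ioc (0:ℝ) t, ‖ml2 ρ 1 (-a * s ^ ρ)‖ ≤ B := by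
    intro s hs
    have hs' : Summable (fun k : ℕ => ‖(-a * s ^ ρ) ^ k / Real.Gamma ((k:ℝ) * ρ + 1)‖) := by
      refine Summable.congr (ml2_summable ρ 1 hρ le_rfl (a * s ^ ρ)) fun k => ?_
      rw [Real.norm_eq_abs, abs_div, abs_pow, abs_mul, abs_neg, abs_of_pos ha,
        abs_of_nonneg (Real.rpow_nonneg hs.1.le _), abs_of_pos (hΓpos k)]
    calc ‖ml2 ρ 1 (-a * s ^ ρ)‖ ≤ ∑' k : ℕ, ‖(-a * s ^ ρ) ^ k / Real.Gamma ((k:ℝ) * ρ + 1)‖ :=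
          norm_tsum_le_tsum_norm hs'
      _ ≤ B := by
          refine Summable.tsum_le_tsum (h := fun k => ?_) hs' hBsum
          rw [Real.norm_eq_abs, abs_div, abs_pow, abs_mul, abs_neg, abs_of_pos ha,
            abs_of_nonneg (Real.rpow_nonneg hs.1.le _), abs_of_pos (hΓpos k)]
          gcongr
          · exact mul_nonneg ha.le (Real.rpow_nonneg hs.1.le _)
          · exact hs.1.le
          · exact hs.2
  have hii : IntegrableOn (fun s => ml2 ρ 1 (-a * s ^ ρ)) (Set.Ioc 0 t) := by
    refine Integrable.mono' (g := fun _ => B)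
      (integrableOn_const measure_Ioc_lt_top.ne) hASM ?_
    filter_upwards [ae_restrict_mem measurableSet_Ioc] with s hs
    exact hbound s hs
  refine ⟨hii, ?_⟩
  have hLHS : ∫ s in Set.Ioc (0:ℝ) t, ml2 ρ 1 (-a * s ^ ρ)
      = ∫ s in Set.Ioc (0:ℝ) t, (∑' k : ℕ, f k s) := by
    refine setIntegral_congr_fun measurableSet_Ioc fun s hs => ?_
    exact ((hsum_eq s hs.1).tsum_eq).symm
  rw [hLHS, ← hint]
  have hterm2 : ∀ k : ℕ, ∫ s in Set.Ioc (0:ℝ) t, f k s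
      = t * (((-a) * t ^ ρ) ^ k / Real.Gamma ((k:ℝ) * ρ + 2)) := by
    intro k
    rw [hf]; dsimp only
    rw [integral_const_mul, hrpow_int k, hterm (-a) k]
  simp only [hterm2]
  rw [tsum_mul_left]
  rfl

theorem stmt18 (ρ lam mu M n₀ : ℝ) (hρ : 0 < ρ) (hρ1 : ρ ≤ 1) (hlam : 0 < lam)
    (hmu : 0 < mu) (hM : 0 < M) (hn₀ : 0 ≤ n₀) :
    ∀ t > (0 : ℝ),
      (1 / t) * ∫ s in (0 : ℝ)..t,
          (n₀ * ml2 ρ 1 (-(lam + mu) * s ^ ρ) +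
            M * lam / (lam + mu) * (1 - ml2 ρ 1 (-(lam + mu) * s ^ ρ)))
        = (n₀ - M * lam / (lam + mu)) * ml2 ρ 2 (-(lam + mu) * t ^ ρ)
          + M * lam / (lam + mu) := by
  intro t ht
  set a := lam + mu with hadef
  have ha : 0 < a := by positivity
  set C := M * lam / a with hC
  obtain ⟨hii, hval⟩ := ml2_integral ρ a t hρ ha ht
  have hgI : IntervalIntegrable (fun s => ml2 ρ 1 (-a * s ^ ρ)) volume 0 t :=
    (intervalIntegrable_iff_integrableOn_Ioc_of_le ht.le).mpr hii
  have hrw : ∀ s : ℝ, n₀ * ml2 ρ 1 (-a * s ^ ρ) + C * (1 - ml2 ρ 1 (-a * s ^ ρ))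
      = (n₀ - C) * ml2 ρ 1 (-a * s ^ ρ) + C := fun s => by ring
  simp only [hrw]
  have h1 : ∫ s in (0:ℝ)..t, ml2 ρ 1 (-a * s ^ ρ) = t * ml2 ρ 2 (-a * t ^ ρ) := by
    rw [intervalIntegral.integral_of_le ht.le]; exact hval
  rw [intervalIntegral.integral_add (hgI.const_mul _) intervalIntegrable_const,
    intervalIntegral.integral_const_mul, h1, intervalIntegral.integral_const, smul_eq_mul]
  field_simp
  ring
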